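/- Let 2 < p < ∞, q = 2(p−1)², k ∈ ℕ, and ρ ∈ ℝ^k with ρ₁ ≥ ρ₂ ≥ ⋯ ≥ ρ_k > 0. For 0 ≤ β < β* := 2/(q ρ₁²) = 1/((p−1)² ρ₁²), define f_{ρ,β}(x) = ∑_{j=1}^k x_j²/ρ_j² − β ‖x‖_p². Then f_{ρ,β} is a non-negative convex function on ℝ^k. -/

import Mathlib

open Real Set

set_option maxHeartbeats 1000000

noncomputable section

/-- The `ℓᵖ` norm on `ℝᵏ`. -/
def pnormFin {k : ℕ} (p : ℝ) (x : Fin k → ℝ) : ℝ := (∑ j, |x j| ^ p) ^ (1 / p)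

/-- midpoint concavity of rpow for exponent in (0,1] -/
lemma mc_rpow {a b : ℝ} (ha : 0 ≤ a) (hb : 0 ≤ b) {r : ℝ} (hr0 : 0 < r) (hr1 : r ≤ 1) :
    a ^ r + b ^ r ≤ 2 * ((a + b) / 2) ^ r := by
  have h1r : 1 ≤ 1 / r := by rw [le_div_iff₀ hr0]; linarith
  have har : 0 ≤ a ^ r := Real.rpow_nonneg ha r
  have hbr : 0 ≤ b ^ r := Real.rpow_nonneg hb r
  have h := Real.rpow_arith_mean_le_arith_mean_rpow (Finset.univ : Finset (Fin 2))
      ![1/2, 1/2] ![a ^ r, b ^ r]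
      (by intro i _; fin_cases i <;> norm_num)
      (by simp [Fin.sum_univ_two]; norm_num)
      (by intro i _; fin_cases i <;> simpa)
      h1r
  simp only [Fin.sum_univ_two, Matrix.cons_val_zero, Matrix.cons_val_one, Matrix.head_cons] at h
  have hra : (a ^ r) ^ (1 / r) = a := by
    rw [← Real.rpow_mul ha, mul_one_div_cancel hr0.ne', Real.rpow_one]
  have hrb : (b ^ r) ^ (1 / r) = b := by
    rw [← Real.rpow_mul hb, mul_one_div_cancel hr0.ne', Real.rpow_one]
  rw [hra, hrb] at h
  have h2 : ((a ^ r + b ^ r) / 2) ^ (1 / r) ≤ (a + b) / 2 := by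
    have : (1:ℝ)/2 * a ^ r + 1/2 * b ^ r = (a ^ r + b ^ r) / 2 := by ring
    rw [this] at h; linarith
  have h3 := Real.rpow_le_rpow (Real.rpow_nonneg (by positivity) _) h2 hr0.le
  rw [← Real.rpow_mul (by positivity), one_div_mul_cancel hr0.ne', Real.rpow_one] at h3
  linarith

/-- two-term superadditivity of rpow, r ≥ 1 -/
lemma add_rpow_le {x y r : ℝ} (hx : 0 ≤ x) (hy : 0 ≤ y) (hr : 1 ≤ r) :
    x ^ r + y ^ r ≤ (x + y) ^ r := by
  have h := NNReal.add_rpow_le_rpow_add x.toNNReal y.toNNReal hr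
  have h2 := NNReal.coe_le_coe.2 h
  push_cast at h2
  rwa [Real.coe_toNNReal x hx, Real.coe_toNNReal y hy] at h2

/-- finset superadditivity of rpow -/
lemma sum_rpow_le {ι : Type*} (s : Finset ι) (f : ι → ℝ) (hf : ∀ i, 0 ≤ f i) {r : ℝ}
    (hr : 1 ≤ r) : ∑ i ∈ s, f i ^ r ≤ (∑ i ∈ s, f i) ^ r := by
  classical
  induction s using Finset.induction_on with
  | empty => simp [Real.zero_rpow (by positivity : r ≠ 0)]
  | @insert a s' hx ih =>
      rw [Finset.sum_insert hx, Finset.sum_insert hx]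
      calc f a ^ r + ∑ i ∈ s', f i ^ r ≤ f a ^ r + (∑ i ∈ s', f i) ^ r := by linarith
        _ ≤ (f a + ∑ i ∈ s', f i) ^ r :=
            add_rpow_le (hf a) (Finset.sum_nonneg fun i _ => hf i) hr

section core
variable {p : ℝ}

private lemma Rpos (hp : 2 ≤ p) (t : ℝ) : (0:ℝ) < 1 + (p-1)*t^2 := by nlinarith [sq_nonneg t]

/-- The calculus core: inner inequality on [0,1] implies the BCL scalar inequality on [0,1]. -/
lemma bcl_core (hp : 2 ≤ p)
    (hin : ∀ t ∈ Icc (0:ℝ) 1, (1+t)^(p-2) + (1-t)^(p-2) ≤ 2*(1+(p-1)*t^2)^((p-2)/2)) :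
    ∀ t ∈ Icc (0:ℝ) 1, (1+t)^p + (1-t)^p ≤ 2*(1+(p-1)*t^2)^(p/2) := by
  set D : ℝ → ℝ := fun t => 2*(p-1)*(t*(1+(p-1)*t^2)^(p/2-1)) - ((1+t)^(p-1) - (1-t)^(p-1))
    with hD
  set g : ℝ → ℝ := fun t => 2*(1+(p-1)*t^2)^(p/2) - ((1+t)^p + (1-t)^p) with hg
  have hRpos : ∀ t : ℝ, (0:ℝ) < 1 + (p-1)*t^2 := Rpos hp
  have hU : ∀ t : ℝ, HasDerivAt (fun t : ℝ => 1 + (p-1)*t^2) ((p-1)*(2*t)) t := by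
    intro t
    have h := ((hasDerivAt_pow 2 t).const_mul (p-1)).const_add 1
    exact h.congr_deriv (by push_cast; ring)
  -- D has the expected derivative on (0,1)
  have hDd : ∀ t ∈ Ioo (0:ℝ) 1, HasDerivAt D
      (2*(p-1)*(1*(1+(p-1)*t^2)^(p/2-1) + t*((p-1)*(2*t)*(p/2-1)*(1+(p-1)*t^2)^(p/2-1-1)))
        - (1*(p-1)*(1+t)^(p-1-1) - (-1)*(p-1)*(1-t)^(p-1-1))) t := by
    intro t ht
    have h1t : (0:ℝ) < 1 + t := by linarith [ht.1]
    have h1t' : (0:ℝ) < 1 - t := by linarith [ht.2]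
    have hM1 : HasDerivAt (fun t : ℝ => (1+(p-1)*t^2)^(p/2-1))
        ((p-1)*(2*t) * (p/2-1) * (1+(p-1)*t^2)^(p/2-1-1)) t :=
      (hU t).rpow_const (Or.inl (hRpos t).ne')
    have htM : HasDerivAt (fun t : ℝ => t*(1+(p-1)*t^2)^(p/2-1))
        (1*(1+(p-1)*t^2)^(p/2-1) + t*((p-1)*(2*t) * (p/2-1) * (1+(p-1)*t^2)^(p/2-1-1))) t :=
      (hasDerivAt_id t).mul hM1
    have hA1 : HasDerivAt (fun t : ℝ => (1+t)^(p-1)) (1*(p-1)*(1+t)^(p-1-1)) t :=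
      HasDerivAt.rpow_const ((hasDerivAt_id t).const_add 1) (Or.inl h1t.ne')
    have hB1 : HasDerivAt (fun t : ℝ => (1-t)^(p-1)) ((-1)*(p-1)*(1-t)^(p-1-1)) t :=
      HasDerivAt.rpow_const ((hasDerivAt_id t).const_sub 1) (Or.inl h1t'.ne')
    exact ((htM.const_mul (2*(p-1))).sub (hA1.sub hB1))
  -- the derivative of D is nonneg on (0,1)
  have hDdnn : ∀ t ∈ Ioo (0:ℝ) 1, 0 ≤
      (2*(p-1)*(1*(1+(p-1)*t^2)^(p/2-1) + t*((p-1)*(2*t)*(p/2-1)*(1+(p-1)*t^2)^(p/2-1-1)))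
        - (1*(p-1)*(1+t)^(p-1-1) - (-1)*(p-1)*(1-t)^(p-1-1))) := by
    intro t ht
    have hIcc : t ∈ Icc (0:ℝ) 1 := ⟨ht.1.le, ht.2.le⟩
    have h2 := hin t hIcc
    have hexp : (p-2)/2 = p/2 - 1 := by ring
    have hexp2 : p - 1 - 1 = p - 2 := by ring
    rw [hexp] at h2
    rw [hexp2]
    have hmid : 0 ≤ t*((p-1)*(2*t)*(p/2-1)*(1+(p-1)*t^2)^(p/2-1-1)) := by
      have : (0:ℝ) ≤ (1+(p-1)*t^2)^(p/2-1-1) := Real.rpow_nonneg (hRpos t).le _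
      have h1 : 0 ≤ p/2 - 1 := by linarith
      have := mul_nonneg (mul_nonneg (mul_nonneg (by linarith : (0:ℝ) ≤ p - 1)
        (by linarith [ht.1] : (0:ℝ) ≤ 2*t)) h1) this
      nlinarith [ht.1.le]
    have hmul := mul_le_mul_of_nonneg_left h2 (by linarith : (0:ℝ) ≤ p - 1)
    nlinarith
  -- D is monotone on [0,1]
  have hDcont : Continuous D := by
    have cR : Continuous fun t : ℝ => 1 + (p-1)*t^2 :=
      continuous_const.add (continuous_const.mul (continuous_pow 2))
    have c1 : Continuous fun t : ℝ => 1 + t := continuous_const.add continuous_id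
    have c2 : Continuous fun t : ℝ => 1 - t := continuous_const.sub continuous_id
    exact ((continuous_const.mul (continuous_id.mul
        (cR.rpow_const fun t => Or.inr (by linarith)))).sub
      ((c1.rpow_const fun t => Or.inr (by linarith)).sub
        (c2.rpow_const fun t => Or.inr (by linarith))))
  have hDmono : MonotoneOn D (Icc 0 1) := by
    apply monotoneOn_of_deriv_nonneg (convex_Icc 0 1) hDcont.continuousOn
    · intro t ht
      rw [interior_Icc] at ht
      exact ((hDd t ht).differentiableAt).differentiableWithinAt
    · intro t ht
      rw [interior_Icc] at ht
      rw [(hDd t ht).deriv]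
      exact hDdnn t ht
  have hD0 : D 0 = 0 := by simp [hD, Real.one_rpow]
  have hDnn : ∀ t ∈ Icc (0:ℝ) 1, 0 ≤ D t := by
    intro t ht
    have := hDmono (left_mem_Icc.2 zero_le_one) ht ht.1
    rwa [hD0] at this
  -- g has derivative p * D t on (0,1)
  have hgd : ∀ t ∈ Ioo (0:ℝ) 1, HasDerivAt g (p * D t) t := by
    intro t ht
    have h1t : (0:ℝ) < 1 + t := by linarith [ht.1]
    have h1t' : (0:ℝ) < 1 - t := by linarith [ht.2]
    have hM : HasDerivAt (fun t : ℝ => (1+(p-1)*t^2)^(p/2))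
        ((p-1)*(2*t) * (p/2) * (1+(p-1)*t^2)^(p/2-1)) t :=
      (hU t).rpow_const (Or.inl (hRpos t).ne')
    have hA : HasDerivAt (fun t : ℝ => (1+t)^p) (1*p*(1+t)^(p-1)) t :=
      HasDerivAt.rpow_const ((hasDerivAt_id t).const_add 1) (Or.inl h1t.ne')
    have hB : HasDerivAt (fun t : ℝ => (1-t)^p) ((-1)*p*(1-t)^(p-1)) t :=
      HasDerivAt.rpow_const ((hasDerivAt_id t).const_sub 1) (Or.inl h1t'.ne')
    have h := (hM.const_mul 2).sub (hA.add hB)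
    exact h.congr_deriv (by simp only [hD]; ring)
  have hgcont : Continuous g := by
    have cR : Continuous fun t : ℝ => 1 + (p-1)*t^2 :=
      continuous_const.add (continuous_const.mul (continuous_pow 2))
    have c1 : Continuous fun t : ℝ => 1 + t := continuous_const.add continuous_id
    have c2 : Continuous fun t : ℝ => 1 - t := continuous_const.sub continuous_id
    exact ((continuous_const.mul (cR.rpow_const fun t => Or.inr (by linarith))).sub
      ((c1.rpow_const fun t => Or.inr (by linarith)).add
        (c2.rpow_const fun t => Or.inr (by linarith))))
  have hgmono : MonotoneOn g (Icc 0 1) := by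
    apply monotoneOn_of_deriv_nonneg (convex_Icc 0 1) hgcont.continuousOn
    · intro t ht
      rw [interior_Icc] at ht
      exact ((hgd t ht).differentiableAt).differentiableWithinAt
    · intro t ht
      rw [interior_Icc] at ht
      rw [(hgd t ht).deriv]
      exact mul_nonneg (by linarith) (hDnn t ⟨ht.1.le, ht.2.le⟩)
  have hg0 : g 0 = 0 := by simp [hg, Real.one_rpow]; norm_num
  intro t ht
  have := hgmono (left_mem_Icc.2 zero_le_one) ht ht.1
  rw [hg0] at this
  simp only [hg] at this
  linarith
end core

lemma sq_rpow_half {a : ℝ} (ha : 0 ≤ a) (s : ℝ) : (a^2)^(s/2) = a^s := by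
  rw [← Real.rpow_natCast a 2, ← Real.rpow_mul ha]
  congr 1
  push_cast
  ring

lemma bcl01 (n : ℕ) : ∀ p : ℝ, 2 ≤ p → p ≤ 2*n + 4 →
    ∀ t ∈ Icc (0:ℝ) 1, (1+t)^p + (1-t)^p ≤ 2*(1+(p-1)*t^2)^(p/2) := by
  induction n with
  | zero =>
    intro p hp hp4
    apply bcl_core hp
    intro t ht
    obtain ⟨ht0, ht1⟩ := ht
    have h1t : (0:ℝ) ≤ 1 + t := by linarith
    have h1t' : (0:ℝ) ≤ 1 - t := by linarith
    rcases eq_or_lt_of_le hp with he | hlt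
    · rw [← he]; norm_num
    · have hr0 : 0 < (p-2)/2 := by linarith
      have hr1 : (p-2)/2 ≤ 1 := by push_cast at hp4; linarith
      have h := mc_rpow (sq_nonneg (1+t)) (sq_nonneg (1-t)) hr0 hr1
      rw [sq_rpow_half h1t, sq_rpow_half h1t'] at h
      have he2 : ((1+t)^2 + (1-t)^2)/2 = 1 + t^2 := by ring
      rw [he2] at h
      refine h.trans ?_
      have : (1 + t^2 : ℝ) ≤ 1 + (p-1)*t^2 := by nlinarith [sq_nonneg t]
      have := Real.rpow_le_rpow (by positivity) this hr0.le
      linarith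
  | succ n ih =>
    intro p hp hp4
    rcases le_or_gt p (2*n + 4) with hle | hgt
    · exact ih p hp hle
    · apply bcl_core hp
      intro t ht
      have hp2 : 2 ≤ p - 2 := by push_cast at hgt ⊢; linarith [(Nat.cast_nonneg n : (0:ℝ) ≤ n)]
      have hp2' : p - 2 ≤ 2*n + 4 := by push_cast at hp4 ⊢; linarith
      have h := ih (p-2) hp2 hp2' t ht
      have he : p - 2 - 1 = p - 3 := by ring
      rw [he] at h
      refine h.trans ?_
      have hb : (1 + (p-3)*t^2 : ℝ) ≤ 1 + (p-1)*t^2 := by nlinarith [sq_nonneg t]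
      have := Real.rpow_le_rpow (by nlinarith [sq_nonneg t]) hb (by linarith : (0:ℝ) ≤ (p-2)/2)
      linarith

lemma bcl_scalar {p : ℝ} (hp : 2 ≤ p) (a b : ℝ) :
    |a+b|^p + |a-b|^p ≤ 2*(a^2 + (p-1)*b^2)^(p/2) := by
  -- first, the [0,1] normalized version
  obtain ⟨n, hn⟩ := exists_nat_ge p
  have L01 := bcl01 n p hp (by push_cast; linarith [(Nat.cast_nonneg n : (0:ℝ) ≤ n)])
  -- key0 : case 0 ≤ b ≤ a
  have key0 : ∀ a b : ℝ, 0 ≤ b → b ≤ a → |a+b|^p + |a-b|^p ≤ 2*(a^2 + (p-1)*b^2)^(p/2) := by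
    intro a b hb hba
    have ha : 0 ≤ a := hb.trans hba
    rcases eq_or_lt_of_le ha with ha0 | ha0
    · have hb0 : b = 0 := le_antisymm (by linarith) hb
      have ha0' : a = 0 := ha0.symm
      subst hb0; subst ha0'
      simp only [add_zero, sub_zero, abs_zero]
      rw [Real.zero_rpow (by linarith : p ≠ 0)]
      norm_num
      exact Real.rpow_nonneg le_rfl _
    · have ha' : a ≠ 0 := ne_of_gt ha0
      have ht : b/a ∈ Icc (0:ℝ) 1 := ⟨div_nonneg hb ha, (div_le_one ha0).2 hba⟩
      have ht2 : 0 ≤ (b/a)^2 := sq_nonneg _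
      have h := L01 (b/a) ht
      have hmul := mul_le_mul_of_nonneg_left h (Real.rpow_nonneg ha p)
      have e1 : a^p * (1+b/a)^p = |a+b|^p := by
        rw [← Real.mul_rpow ha (by linarith [ht.1] : (0:ℝ) ≤ 1 + b/a)]
        congr 1
        rw [abs_of_nonneg (by linarith : (0:ℝ) ≤ a + b)]
        field_simp
      have e2 : a^p * (1-b/a)^p = |a-b|^p := by
        rw [← Real.mul_rpow ha (by linarith [ht.2] : (0:ℝ) ≤ 1 - b/a)]
        congr 1
        rw [abs_of_nonneg (by linarith : (0:ℝ) ≤ a - b)]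
        field_simp
      have e3 : a^p * (1+(p-1)*(b/a)^2)^(p/2) = (a^2 + (p-1)*b^2)^(p/2) := by
        rw [← sq_rpow_half ha p, ← Real.mul_rpow (sq_nonneg a) (by nlinarith)]
        congr 1
        field_simp
      calc |a+b|^p + |a-b|^p = a^p * ((1+b/a)^p + (1-b/a)^p) := by rw [mul_add, e1, e2]
        _ ≤ a^p * (2*(1+(p-1)*(b/a)^2)^(p/2)) := hmul
        _ = 2*(a^2 + (p-1)*b^2)^(p/2) := by
            rw [← mul_assoc, mul_comm (a^p) 2, mul_assoc, e3]
  -- key : case 0 ≤ a, 0 ≤ b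
  have key : ∀ a b : ℝ, 0 ≤ a → 0 ≤ b → |a+b|^p + |a-b|^p ≤ 2*(a^2 + (p-1)*b^2)^(p/2) := by
    intro a b ha hb
    rcases le_or_gt b a with hba | hab
    · exact key0 a b hb hba
    · have h := key0 b a ha hab.le
      have e1 : |b+a| = |a+b| := by rw [add_comm]
      have e2 : |b-a| = |a-b| := abs_sub_comm b a
      rw [e1, e2] at h
      refine h.trans ?_
      have h2 : a^2 ≤ b^2 := by nlinarith
      have h3 : (0:ℝ) ≤ (p-2)*(b^2-a^2) := mul_nonneg (by linarith) (by linarith)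
      have h4 : b^2 + (p-1)*a^2 ≤ a^2 + (p-1)*b^2 := by nlinarith
      have := Real.rpow_le_rpow (by nlinarith [mul_nonneg (show (0:ℝ) ≤ p-1 by linarith) (sq_nonneg a), sq_nonneg b]) h4 (by linarith : (0:ℝ) ≤ p/2)
      linarith
  -- dispatch on signs
  rcases le_or_gt 0 a with ha | ha <;> rcases le_or_gt 0 b with hb | hb
  · exact key a b ha hb
  · have h := key a (-b) ha (by linarith)
    rw [show a + -b = a - b by ring, show a - -b = a + b by ring, show (-b)^2 = b^2 by ring] at h
    linarith
  · have h := key (-a) b (by linarith) hb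
    rw [show -a + b = -(a - b) by ring, abs_neg, show -a - b = -(a+b) by ring, abs_neg,
      show (-a)^2 = a^2 by ring] at h
    linarith
  · have h := key (-a) (-b) (by linarith) (by linarith)
    rw [show -a + -b = -(a + b) by ring, abs_neg, show -a - -b = -(a-b) by ring, abs_neg,
      show (-a)^2 = a^2 by ring, show (-b)^2 = b^2 by ring] at h
    linarith

lemma lp_le_l2 {k : ℕ} {p : ℝ} (hp : 2 ≤ p) (x : Fin k → ℝ) :
    (∑ j, |x j|^p)^(2/p) ≤ ∑ j, (x j)^2 := by
  have hp0 : (0:ℝ) < p := by linarith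
  have e1 : ∀ j, |x j|^p = ((x j)^2)^(p/2) := by
    intro j
    rw [← sq_abs (x j), sq_rpow_half (abs_nonneg _) p]
  have h : ∑ j, |x j|^p ≤ (∑ j, (x j)^2)^(p/2) := by
    calc ∑ j, |x j|^p = ∑ j, ((x j)^2)^(p/2) := by simp_rw [e1]
      _ ≤ (∑ j, (x j)^2)^(p/2) := sum_rpow_le _ _ (fun j => sq_nonneg _) (by linarith)
  have h2 := Real.rpow_le_rpow (Finset.sum_nonneg fun j _ => Real.rpow_nonneg (abs_nonneg _) _)
    h (by positivity : (0:ℝ) ≤ 2/p)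
  rwa [← Real.rpow_mul (Finset.sum_nonneg fun j _ => sq_nonneg _),
    show p/2*(2/p) = 1 from by field_simp, Real.rpow_one] at h2

lemma smooth_mid {k : ℕ} {p : ℝ} (hp : 2 ≤ p) (x y : Fin k → ℝ) :
    (∑ j, |x j|^p)^(2/p) + (∑ j, |y j|^p)^(2/p)
      ≤ 2*(∑ j, |(x j + y j)/2|^p)^(2/p) + 2*(p-1)*∑ j, ((x j - y j)/2)^2 := by
  have hp0 : (0:ℝ) < p := by linarith
  have hp1 : (0:ℝ) ≤ p - 1 := by linarith
  set a : Fin k → ℝ := fun j => (x j + y j)/2 with ha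
  set b : Fin k → ℝ := fun j => (x j - y j)/2 with hb
  have hSnn : ∀ z : Fin k → ℝ, (0:ℝ) ≤ ∑ j, |z j|^p :=
    fun z => Finset.sum_nonneg fun j _ => Real.rpow_nonneg (abs_nonneg _) _
  -- step 1 : concavity
  have step1 : (∑ j, |x j|^p)^(2/p) + (∑ j, |y j|^p)^(2/p)
      ≤ 2*((∑ j, |x j|^p + ∑ j, |y j|^p)/2)^(2/p) :=
    mc_rpow (hSnn x) (hSnn y) (by positivity) (by rw [div_le_one hp0]; linarith)
  -- step 3 : pointwise scalar BCL
  have step3 : (∑ j, |x j|^p + ∑ j, |y j|^p)/2 ≤ ∑ j, ((a j)^2 + (p-1)*(b j)^2)^(p/2) := by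
    rw [← Finset.sum_add_distrib, Finset.sum_div]
    apply Finset.sum_le_sum
    intro j _
    have h := bcl_scalar hp (a j) (b j)
    have e1 : a j + b j = x j := by simp [ha, hb]; ring
    have e2 : a j - b j = y j := by simp [ha, hb]; ring
    rw [e1, e2] at h
    linarith
  have hTnn : ∀ j : Fin k, (0:ℝ) ≤ (a j)^2 + (p-1)*(b j)^2 := by
    intro j; nlinarith [sq_nonneg (a j), sq_nonneg (b j), mul_nonneg hp1 (sq_nonneg (b j))]
  -- step 5 : Minkowski with exponent p/2
  have step5 : (∑ j, ((a j)^2 + (p-1)*(b j)^2)^(p/2))^(2/p)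
      ≤ (∑ j, ((a j)^2)^(p/2))^(2/p) + (∑ j, ((p-1)*(b j)^2)^(p/2))^(2/p) := by
    have hmink := Real.Lp_add_le (Finset.univ : Finset (Fin k))
      (fun j => (a j)^2) (fun j => (p-1)*(b j)^2) (by linarith : (1:ℝ) ≤ p/2)
    have e0 : (1:ℝ)/(p/2) = 2/p := by field_simp
    rw [e0] at hmink
    have e1 : ∀ j : Fin k, |(a j)^2 + (p-1)*(b j)^2| = (a j)^2 + (p-1)*(b j)^2 :=
      fun j => abs_of_nonneg (hTnn j)
    have e2 : ∀ j : Fin k, |(a j)^2| = (a j)^2 := fun j => abs_of_nonneg (sq_nonneg _)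
    have e3 : ∀ j : Fin k, |(p-1)*(b j)^2| = (p-1)*(b j)^2 :=
      fun j => abs_of_nonneg (mul_nonneg hp1 (sq_nonneg _))
    simp_rw [e1, e2, e3] at hmink
    exact hmink
  -- step 6 : identify the two pieces
  have step6 : (∑ j, ((a j)^2)^(p/2))^(2/p) = (∑ j, |a j|^p)^(2/p) := by
    congr 1
    exact Finset.sum_congr rfl fun j _ => by
      rw [← sq_abs (a j), sq_rpow_half (abs_nonneg _) p]
  have step7 : (∑ j, ((p-1)*(b j)^2)^(p/2))^(2/p) = (p-1)*(∑ j, |b j|^p)^(2/p) := by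
    have e : ∀ j : Fin k, ((p-1)*(b j)^2)^(p/2) = (p-1)^(p/2) * |b j|^p := by
      intro j
      rw [Real.mul_rpow hp1 (sq_nonneg _), ← sq_abs (b j), sq_rpow_half (abs_nonneg _) p]
    simp_rw [e, ← Finset.mul_sum]
    rw [Real.mul_rpow (Real.rpow_nonneg hp1 _) (hSnn b),
      ← Real.rpow_mul hp1, show p/2*(2/p) = 1 from by field_simp, Real.rpow_one]
  -- step 8 : lp ≤ l2 on b
  have step8 : (∑ j, |b j|^p)^(2/p) ≤ ∑ j, (b j)^2 := lp_le_l2 hp b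
  -- combine
  have step4 : ((∑ j, |x j|^p + ∑ j, |y j|^p)/2)^(2/p)
      ≤ (∑ j, ((a j)^2 + (p-1)*(b j)^2)^(p/2))^(2/p) :=
    Real.rpow_le_rpow (by positivity) step3 (by positivity)
  have hfin : (p-1)*(∑ j, |b j|^p)^(2/p) ≤ (p-1)*∑ j, (b j)^2 :=
    mul_le_mul_of_nonneg_left step8 hp1
  calc (∑ j, |x j|^p)^(2/p) + (∑ j, |y j|^p)^(2/p)
      ≤ 2*((∑ j, |x j|^p + ∑ j, |y j|^p)/2)^(2/p) := step1
    _ ≤ 2*((∑ j, ((a j)^2 + (p-1)*(b j)^2)^(p/2))^(2/p)) := by linarith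
    _ ≤ 2*((∑ j, |a j|^p)^(2/p) + (p-1)*(∑ j, |b j|^p)^(2/p)) := by
        have := step5
        rw [step6, step7] at this
        linarith
    _ ≤ 2*(∑ j, |a j|^p)^(2/p) + 2*(p-1)*∑ j, (b j)^2 := by linarith

lemma smooth_mid' {k : ℕ} {p : ℝ} (hp : 2 ≤ p) (x y m b : Fin k → ℝ)
    (hm : ∀ j, m j = (x j + y j)/2) (hb : ∀ j, b j = (x j - y j)/2) :
    (∑ j, |x j|^p)^(2/p) + (∑ j, |y j|^p)^(2/p)
      ≤ 2*(∑ j, |m j|^p)^(2/p) + 2*(p-1)*∑ j, (b j)^2 := by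
  have h := smooth_mid hp x y
  simp_rw [hm, hb]
  exact h

/-- 1-d: continuous midpoint-convex function satisfies the convexity inequality on [0,1]. -/
lemma midpoint_to_convex_1d (φ : ℝ → ℝ) (hc : Continuous φ)
    (hm : ∀ s t : ℝ, φ ((s+t)/2) ≤ (φ s + φ t)/2) :
    ∀ μ : ℝ, 0 ≤ μ → μ ≤ 1 → φ μ ≤ (1-μ)*φ 0 + μ*φ 1 := by
  set g : ℝ → ℝ := fun u => φ u - ((1-u)*φ 0 + u*φ 1) with hgdef
  have hgc : Continuous g := by
    apply hc.sub
    fun_prop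
  have hgm : ∀ s t : ℝ, g ((s+t)/2) ≤ (g s + g t)/2 := by
    intro s t
    have := hm s t
    simp only [hgdef]
    ring_nf
    ring_nf at this
    linarith
  have hg0 : g 0 = 0 := by simp [hgdef]
  have hg1 : g 1 = 0 := by simp [hgdef]
  clear_value g
  have key : ∀ u ∈ Icc (0:ℝ) 1, g u ≤ 0 := by
    obtain ⟨u₀, hu₀, hmax⟩ := isCompact_Icc.exists_isMaxOn (nonempty_Icc.2 zero_le_one)
      hgc.continuousOn
    intro u hu
    have hle : g u ≤ g u₀ := hmax hu
    by_contra hpos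
    push_neg at hpos
    have hM : 0 < g u₀ := lt_of_lt_of_le hpos hle
    set M := g u₀ with hMdef
    set E : Set ℝ := {v | v ∈ Icc (0:ℝ) 1 ∧ g v = M} with hEdef
    have hEc : IsClosed E := by
      have : E = Icc (0:ℝ) 1 ∩ g ⁻¹' {M} := by
        ext v; simp [hEdef]
      rw [this]
      exact isClosed_Icc.inter (isClosed_singleton.preimage hgc)
    have hEne : E.Nonempty := ⟨u₀, hu₀, rfl⟩
    have hEbdd : BddBelow E := ⟨0, fun v hv => hv.1.1⟩
    set m := sInf E with hmdef
    have hmE : m ∈ E := hEc.csInf_mem hEne hEbdd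
    obtain ⟨hmIcc, hmM⟩ := hmE
    have hm0 : m ≠ 0 := fun h => by rw [h, hg0] at hmM; linarith
    have hm1 : m ≠ 1 := fun h => by rw [h, hg1] at hmM; linarith
    have hmlt : 0 < m := lt_of_le_of_ne hmIcc.1 (Ne.symm hm0)
    have hmgt : m < 1 := lt_of_le_of_ne hmIcc.2 hm1
    set δ := min m (1-m) with hδdef
    have hδ : 0 < δ := lt_min hmlt (by linarith)
    have hδm : δ ≤ m := min_le_left _ _
    have hδm' : δ ≤ 1 - m := min_le_right _ _
    have h1 : m - δ ∈ Icc (0:ℝ) 1 := ⟨by linarith, by linarith⟩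
    have h2 : m + δ ∈ Icc (0:ℝ) 1 := ⟨by linarith, by linarith⟩
    clear_value M m δ
    have hmid := hgm (m-δ) (m+δ)
    rw [show ((m-δ)+(m+δ))/2 = m from by ring] at hmid
    have hb1 : g (m-δ) ≤ M := by rw [hMdef]; exact hmax h1
    have hb2 : g (m+δ) ≤ M := by rw [hMdef]; exact hmax h2
    have hge : g (m-δ) = M := by rw [hmM] at hmid; linarith
    have hinf : sInf E ≤ m - δ := csInf_le hEbdd ⟨h1, hge⟩
    rw [← hmdef] at hinf
    linarith
  intro μ h0 h1
  have := key μ ⟨h0, h1⟩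
  simp only [hgdef] at this
  linarith

/-- Bridge: continuous midpoint-convex function on `Fin k → ℝ` is convex. -/
lemma convexOn_of_midpoint {k : ℕ} (f : (Fin k → ℝ) → ℝ) (hc : Continuous f)
    (hm : ∀ x y : Fin k → ℝ, f ((1/2 : ℝ) • (x + y)) ≤ (f x + f y)/2) :
    ConvexOn ℝ univ f := by
  refine ⟨convex_univ, ?_⟩
  intro x _ y _ a b ha hb hab
  set φ : ℝ → ℝ := fun t => f (x + t • (y - x)) with hφdef
  have hφc : Continuous φ := by
    apply hc.comp
    exact continuous_const.add (continuous_id.smul continuous_const)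
  have hφm : ∀ s t : ℝ, φ ((s+t)/2) ≤ (φ s + φ t)/2 := by
    intro s t
    have e : x + ((s+t)/2) • (y - x) = (1/2 : ℝ) • ((x + s • (y-x)) + (x + t • (y-x))) := by
      module
    simp only [hφdef]
    rw [e]
    exact hm _ _
  have h01 : φ b ≤ (1-b)*φ 0 + b*φ 1 := midpoint_to_convex_1d φ hφc hφm b hb (by linarith)
  have e0 : φ 0 = f x := by simp [hφdef]
  have e1 : φ 1 = f y := by simp [hφdef]
  have eb : φ b = f (a • x + b • y) := by
    simp only [hφdef]
    congr 1
    have : a = 1 - b := by linarith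
    rw [this]
    rw [smul_sub, sub_smul, one_smul]
    abel
  rw [e0, e1, eb] at h01
  have hab' : a = 1 - b := by linarith
  rw [hab'] at h01 ⊢
  simp only [smul_eq_mul]
  exact h01

/-- For `2 < p < ∞` and `0 ≤ β < 1/((p−1)² ρ₁²)`, the function
`f_{ρ,β}(x) = ∑ x_j²/ρ_j² − β ‖x‖_p²` is non-negative and convex on `ℝᵏ`. -/
theorem f_nonneg_and_convex_gt_two (p : ℝ) (hp : 2 < p)
    (k : ℕ) (hk : 0 < k)
    (ρ : Fin k → ℝ) (hρpos : ∀ j, 0 < ρ j) (hρanti : Antitone ρ)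
    (β : ℝ) (hβ0 : 0 ≤ β) (hβ : β < 1 / ((p - 1) ^ 2 * ρ ⟨0, hk⟩ ^ 2)) :
    (∀ x : Fin k → ℝ, 0 ≤ (∑ j, x j ^ 2 / ρ j ^ 2) - β * pnormFin p x ^ 2) ∧
      ConvexOn ℝ univ
        (fun x : Fin k → ℝ => (∑ j, x j ^ 2 / ρ j ^ 2) - β * pnormFin p x ^ 2) := by
  have hp2 : (2:ℝ) ≤ p := hp.le
  have hp0 : (0:ℝ) < p := by linarith
  set ρ₀ := ρ ⟨0, hk⟩ with hρ₀def
  have hρ₀ : 0 < ρ₀ := hρpos _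
  have hρle : ∀ j, ρ j ≤ ρ₀ := fun j => hρanti (by simp [Fin.le_def])
  have hρsq : ∀ j, ρ j ^ 2 ≤ ρ₀ ^ 2 := fun j => by nlinarith [hρpos j, hρle j]
  -- β * (p-1)^2 * ρ₀^2 < 1
  have hβργ : β * ((p-1)^2 * ρ₀^2) < 1 := by
    rw [lt_div_iff₀ (mul_pos (by nlinarith : (0:ℝ) < (p-1)^2) (by positivity))] at hβ
    linarith
  have hp1sq : (1:ℝ) ≤ (p-1)^2 := by nlinarith
  have hβρ : β * ρ₀^2 ≤ 1 := by nlinarith [mul_nonneg hβ0 (sq_nonneg ρ₀)]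
  have hβp : β * (p-1) * ρ₀^2 ≤ 1 := by nlinarith [mul_nonneg (mul_nonneg hβ0 (by linarith : (0:ℝ) ≤ p-1)) (sq_nonneg ρ₀)]
  -- pnorm squared as rpow
  have hN2 : ∀ x : Fin k → ℝ, pnormFin p x ^ 2 = (∑ j, |x j|^p)^(2/p) := by
    intro x
    have hS : (0:ℝ) ≤ ∑ j, |x j|^p := Finset.sum_nonneg fun j _ => rpow_nonneg (abs_nonneg _) _
    rw [pnormFin, ← Real.rpow_natCast _ 2, ← Real.rpow_mul hS]
    congr 1
    push_cast
    ring
  -- sum comparison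
  have hQmaj : ∀ x : Fin k → ℝ, ∑ j, (x j)^2 ≤ ρ₀^2 * ∑ j, x j ^ 2/ρ j ^ 2 := by
    intro x
    rw [Finset.mul_sum]
    apply Finset.sum_le_sum
    intro j _
    have hρj := hρpos j
    rw [div_eq_mul_inv, ← mul_assoc]
    have h1 : (x j)^2 = (ρ j^2 * (x j)^2) * (ρ j^2)⁻¹ := by field_simp
    rw [h1]
    apply mul_le_mul_of_nonneg_right _ (by positivity)
    nlinarith [sq_nonneg (x j), hρsq j]
  have hQnn : ∀ x : Fin k → ℝ, (0:ℝ) ≤ ∑ j, x j ^ 2/ρ j ^ 2 :=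
    fun x => Finset.sum_nonneg fun j _ => by positivity
  constructor
  · -- nonnegativity
    intro x
    have h1 : pnormFin p x ^ 2 ≤ ∑ j, (x j)^2 := by rw [hN2]; exact lp_le_l2 hp2 x
    have h2 := hQmaj x
    have h3 : β * pnormFin p x ^ 2 ≤ β * (ρ₀^2 * ∑ j, x j ^ 2/ρ j ^ 2) :=
      mul_le_mul_of_nonneg_left (h1.trans h2) hβ0
    have h4 : β * (ρ₀^2 * ∑ j, x j ^ 2/ρ j ^ 2) ≤ 1 * ∑ j, x j ^ 2/ρ j ^ 2 := by
      rw [← mul_assoc]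
      exact mul_le_mul_of_nonneg_right hβρ (hQnn x)
    linarith
  · -- convexity
    apply convexOn_of_midpoint
    · -- continuity
      have c1 : Continuous fun x : Fin k → ℝ => ∑ j, x j ^ 2 / ρ j ^ 2 :=
        continuous_finset_sum _ fun j _ => ((continuous_apply j).pow 2).div_const _
      have c2 : Continuous fun x : Fin k → ℝ => pnormFin p x := by
        apply Continuous.rpow_const
        · exact continuous_finset_sum _ fun j _ =>
            ((continuous_apply j).abs).rpow_const fun x => Or.inr hp0.le
        · intro x
          exact Or.inr (by positivity)
      exact c1.sub (continuous_const.mul (c2.pow 2))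
    · -- midpoint inequality
      intro x y
      set mf : Fin k → ℝ := fun j => (x j + y j)/2 with hmf
      set bf : Fin k → ℝ := fun j => (x j - y j)/2 with hbf
      have hmeq : (1/2 : ℝ) • (x + y) = mf := by
        funext j
        simp only [Pi.smul_apply, Pi.add_apply, smul_eq_mul, hmf]
        ring
      rw [hmeq]
      show (∑ j, mf j ^ 2 / ρ j ^ 2) - β * pnormFin p mf ^ 2
        ≤ (((∑ j, x j ^ 2 / ρ j ^ 2) - β * pnormFin p x ^ 2)
            + ((∑ j, y j ^ 2 / ρ j ^ 2) - β * pnormFin p y ^ 2)) / 2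
      rw [hN2 mf, hN2 x, hN2 y]
      have hsmooth := smooth_mid' hp2 x y mf bf (fun j => by simp [hmf]) (fun j => by simp [hbf])
      have hquad : (∑ j, x j ^ 2/ρ j ^ 2) + (∑ j, y j ^ 2/ρ j ^ 2)
          - 2 * ∑ j, (mf j) ^ 2/ρ j ^ 2 = 2 * ∑ j, (bf j)^2/ρ j ^ 2 := by
        rw [← Finset.sum_add_distrib, Finset.mul_sum, Finset.mul_sum, ← Finset.sum_sub_distrib]
        apply Finset.sum_congr rfl
        intro j _
        have := hρpos j
        simp only [hmf, hbf]
        field_simp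
        ring
      have hkey : β * (p-1) * ∑ j, (bf j)^2 ≤ ∑ j, (bf j)^2/ρ j ^ 2 := by
        rw [Finset.mul_sum]
        apply Finset.sum_le_sum
        intro j _
        have hρj := hρpos j
        have h1 : (bf j)^2/ρ₀^2 ≤ (bf j)^2/ρ j^2 := by
          rw [div_le_div_iff₀ (by positivity) (by positivity)]
          exact mul_le_mul_of_nonneg_left (hρsq j) (sq_nonneg (bf j))
        have h2 : β * (p-1) * (bf j)^2 ≤ (bf j)^2/ρ₀^2 := by
          rw [le_div_iff₀ (by positivity : (0:ℝ) < ρ₀^2)]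
          nlinarith [mul_le_mul_of_nonneg_left hβp (sq_nonneg (bf j))]
        linarith
      linarith [hquad, mul_le_mul_of_nonneg_left hsmooth hβ0, hkey]
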